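/- For the Wick product on ℂ^{n+1} \ {0} and any two polynomial functions F, G in the variables z, \bar z, the sum defining F * G is finite (only finitely many terms are nonzero), and the Wick product of polynomials is associative: (F*G)*H = F*(G*H) for polynomials F, G, H. -/

import Mathlib

noncomputable section

/-- Polynomials in the commuting variables `z⁰,…,zⁿ, z̄⁰,…,z̄ⁿ`. -/
abbrev Pol (n : ℕ) := MvPolynomial (Fin (n + 1) ⊕ Fin (n + 1)) ℂ

/-- Iterated formal derivative `∂^r/∂z^{i₁}⋯∂z^{i_r}`. -/
def dIter (n : ℕ) (l : List (Fin (n + 1))) (F : Pol n) : Pol n :=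
  l.foldr (fun k q => MvPolynomial.pderiv (Sum.inl k) q) F

/-- Iterated formal derivative `∂^r/∂z̄^{i₁}⋯∂z̄^{i_r}`. -/
def dbarIter (n : ℕ) (l : List (Fin (n + 1))) (F : Pol n) : Pol n :=
  l.foldr (fun k q => MvPolynomial.pderiv (Sum.inr k) q) F

/-- The `r`-th Wick bidifferential operator on polynomials:
`(1/r!) ∑_{i₁,…,i_r} (∂^r F/∂z^{i₁}⋯∂z^{i_r})(∂^r G/∂z̄^{i₁}⋯∂z̄^{i_r})`. -/
def wickC (n r : ℕ) (F G : Pol n) : Pol n :=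
  ((r.factorial : ℂ))⁻¹ •
    ∑ i : Fin r → Fin (n + 1), dIter n (List.ofFn i) F * dbarIter n (List.ofFn i) G

/-- The Wick star product of formal series of polynomials (Cauchy product in
the formal parameter): `(f * g)_r = ∑_{a+b+c=r} W_c(f_a, g_b)`. -/
def wickStar (n : ℕ) (f g : ℕ → Pol n) : ℕ → Pol n := fun r =>
  ∑ p ∈ Finset.HasAntidiagonal.antidiagonal r, ∑ q ∈ Finset.HasAntidiagonal.antidiagonal p.2,
    wickC n p.1 (f q.1) (g q.2)

/-- A polynomial viewed as a formal series concentrated in order `0`. -/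
def emb (n : ℕ) (F : Pol n) : ℕ → Pol n := fun r => if r = 0 then F else 0

open MvPolynomial

section WickAux

variable {σ' : Type*} {R : Type*} [CommSemiring R]

lemma pd_comm (u v : σ') (p : MvPolynomial σ' R) :
    pderiv u (pderiv v p) = pderiv v (pderiv u p) := by
  classical
  induction p using MvPolynomial.induction_on' with
  | monomial s a =>
    simp only [pderiv_monomial]
    by_cases huv : u = v
    · subst huv; rfl
    · congr 1
      · rw [tsub_tsub, tsub_tsub, add_comm]
      · rw [Finsupp.tsub_apply, Finsupp.tsub_apply, Finsupp.single_eq_of_ne huv,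
          Finsupp.single_eq_of_ne (Ne.symm huv)]
        push_cast [Nat.sub_zero]
        ring
  | add p q hp hq => simp [map_add, hp, hq]

lemma pd_totalDegree (i : σ') (p : MvPolynomial σ' R) :
    (pderiv i p).totalDegree ≤ p.totalDegree - 1 := by
  classical
  conv_lhs => rw [← support_sum_monomial_coeff p]
  rw [map_sum]
  refine totalDegree_finsetSum_le fun s hs => ?_
  rw [pderiv_monomial]
  by_cases h : s i = 0
  · simp [h]
  · refine (totalDegree_monomial_le _ _).trans ?_
    have hle : Finsupp.single i 1 ≤ s := by
      rwa [Finsupp.single_le_iff, Nat.one_le_iff_ne_zero]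
    have hsum : ((s - Finsupp.single i 1).sum fun _ e => e) + 1 = s.sum fun _ e => e := by
      conv_rhs => rw [← tsub_add_cancel_of_le hle]
      rw [Finsupp.sum_add_index' (fun _ => rfl) (fun _ _ _ => rfl),
        Finsupp.sum_single_index rfl]
    have hdeg : (s.sum fun _ e => e) ≤ p.totalDegree := le_totalDegree (by simpa using hs)
    simp only [Function.id_def]
    omega

lemma pd_eq_zero_of_deg0 (i : σ') (p : MvPolynomial σ' R) (h : p.totalDegree = 0) :
    pderiv i p = 0 := by
  rw [totalDegree_eq_zero_iff] at h
  conv_lhs => rw [← support_sum_monomial_coeff p]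
  rw [map_sum]
  refine Finset.sum_eq_zero fun s hs => ?_
  rw [pderiv_monomial, h s hs i]
  simp


variable {n : ℕ}

@[simp] lemma dIter_nil (F : Pol n) : dIter n [] F = F := rfl
lemma dIter_cons (k : Fin (n+1)) (l : List (Fin (n+1))) (F : Pol n) :
    dIter n (k :: l) F = pderiv (Sum.inl k) (dIter n l F) := rfl

lemma dIter_deg (l : List (Fin (n+1))) (F : Pol n) :
    (dIter n l F).totalDegree ≤ F.totalDegree - l.length ∧
      (F.totalDegree < l.length → dIter n l F = 0) := by
  induction l with
  | nil => simp
  | cons k l ih =>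
    rw [dIter_cons]
    constructor
    · refine (pd_totalDegree _ _).trans ?_
      have := ih.1
      simp only [List.length_cons]
      omega
    · intro h
      simp only [List.length_cons] at h
      rcases Nat.lt_or_ge F.totalDegree (l.length) with h' | h'
      · rw [ih.2 h', map_zero]
      · have hdeg : (dIter n l F).totalDegree = 0 := by have := ih.1; omega
        exact pd_eq_zero_of_deg0 _ _ hdeg

abbrev TT (n : ℕ) := MvPolynomial (Fin 3 × (Fin (n + 1) ⊕ Fin (n + 1))) ℂ

variable {n : ℕ}

def emA (k : Fin 3) : Pol n →ₐ[ℂ] TT n := rename (fun v => (k, v))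
def muA : TT n →ₐ[ℂ] Pol n := aeval (fun p => X p.2)

@[simp] lemma muA_emA (k : Fin 3) (F : Pol n) : muA (emA k F) = F := by
  rw [muA, emA, aeval_rename]
  exact aeval_X_left_apply F

lemma pderiv_rename_ne {σ' τ' R : Type*} [CommSemiring R] {f : σ' → τ'} {j : τ'}
    (hj : ∀ x, f x ≠ j) (p : MvPolynomial σ' R) : pderiv j (rename f p) = 0 := by
  induction p using MvPolynomial.induction_on with
  | C a => simp
  | add p q hp hq => simp [hp, hq]
  | mul_X p s hp => simp [hp, pderiv_mul, pderiv_X_of_ne (hj s)]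

lemma pderiv_emA_ne {j k : Fin 3} (h : j ≠ k) (w : Fin (n+1) ⊕ Fin (n+1)) (F : Pol n) :
    pderiv (j, w) (emA k F : TT n) = 0 :=
  pderiv_rename_ne (fun _ hx => h (congrArg Prod.fst hx).symm) F

lemma pderiv_emA (k : Fin 3) (w : Fin (n+1) ⊕ Fin (n+1)) (F : Pol n) :
    pderiv (k, w) (emA k F : TT n) = emA k (pderiv w F) :=
  pderiv_rename (f := fun v => ((k : Fin 3), v)) (fun _ _ hab => congrArg Prod.snd hab) w F

lemma pderiv_muA (v : Fin (n+1) ⊕ Fin (n+1)) (Φ : TT n) :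
    pderiv v (muA Φ) = muA (∑ k : Fin 3, pderiv (k, v) Φ) := by
  induction Φ using MvPolynomial.induction_on with
  | C a => simp [muA]
  | add p q hp hq => simp [map_add, hp, hq, Finset.sum_add_distrib]
  | mul_X p s hp =>
    obtain ⟨j, w⟩ := s
    have muAX : muA (X ((j, w)) : TT n) = X w := by simp [muA]
    have key : (∑ k : Fin 3, muA (pderiv ((k, v)) (X ((j, w)) : TT n)))
        = pderiv v (X w : Pol n) := by
      by_cases hvw : w = v
      · subst hvw
        rw [pderiv_X_self, Finset.sum_eq_single j]
        · rw [pderiv_X_self, map_one]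
        · intro k _ hkj
          rw [pderiv_X_of_ne (fun hh => hkj (congrArg Prod.fst hh).symm), map_zero]
        · simp
      · rw [pderiv_X_of_ne hvw]
        refine Finset.sum_eq_zero fun k _ => ?_
        rw [pderiv_X_of_ne (fun hh => hvw (congrArg Prod.snd hh)), map_zero]
    calc pderiv v (muA (p * X ((j, w))))
        = pderiv v (muA p) * X w + muA p * pderiv v (X w) := by
          rw [map_mul, muAX, pderiv_mul]
      _ = muA (∑ k : Fin 3, pderiv ((k, v)) p) * X w
            + muA p * ∑ k : Fin 3, muA (pderiv ((k, v)) (X ((j, w)) : TT n)) := by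
          rw [hp, key]
      _ = ∑ k : Fin 3, (muA (pderiv ((k, v)) p) * X w
            + muA p * muA (pderiv ((k, v)) (X ((j, w)) : TT n))) := by
          rw [map_sum, Finset.sum_mul, Finset.mul_sum, Finset.sum_add_distrib]
      _ = muA (∑ k : Fin 3, pderiv ((k, v)) (p * X ((j, w)))) := by
          rw [map_sum]
          refine Finset.sum_congr rfl fun k _ => ?_
          rw [pderiv_mul, map_add, map_mul, map_mul, muAX]

abbrev VV (n : ℕ) := Fin (n + 1)

@[simp] lemma dIter_append (l : List (VV n)) (v : VV n) (F : Pol n) :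
    dIter n (l ++ [v]) F = dIter n l (pderiv (Sum.inl v) F) := by
  simp [dIter, List.foldr_append]
@[simp] lemma dbarIter_append (l : List (VV n)) (v : VV n) (F : Pol n) :
    dbarIter n (l ++ [v]) F = dbarIter n l (pderiv (Sum.inr v) F) := by
  simp [dbarIter, List.foldr_append]

def PD (u : Fin 3 × (VV n ⊕ VV n)) : Module.End ℂ (TT n) := (pderiv u).toLinearMap

def PP (a b : Fin 3) : Module.End ℂ (TT n) :=
  ∑ i : VV n, PD ((b, Sum.inr i)) * PD ((a, Sum.inl i))

lemma PP_apply (a b : Fin 3) (Φ : TT n) :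
    PP a b Φ = ∑ i : VV n, pderiv ((b, Sum.inr i)) (pderiv ((a, Sum.inl i)) Φ) := by
  simp [PP, PD, LinearMap.sum_apply, Module.End.mul_apply]

lemma commute_PD (u v : Fin 3 × (VV n ⊕ VV n)) : Commute (PD u : Module.End ℂ (TT n)) (PD v) :=
  LinearMap.ext fun p => by
    simp only [Module.End.mul_apply]; exact pd_comm (R := ℂ) u v p

lemma commute_PP (a b c d : Fin 3) : Commute (PP a b : Module.End ℂ (TT n)) (PP c d) := by
  refine Commute.sum_left _ _ _ fun i _ => ?_
  refine Commute.sum_right _ _ _ fun j _ => ?_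
  exact ((commute_PD (b, Sum.inr i) (d, Sum.inr j)).mul_left (commute_PD (a, Sum.inl i) (d, Sum.inr j))).mul_right
    ((commute_PD (b, Sum.inr i) (c, Sum.inl j)).mul_left (commute_PD (a, Sum.inl i) (c, Sum.inl j)))

lemma pderiv_PP (a b : Fin 3) (w : Fin 3 × (VV n ⊕ VV n)) (Φ : TT n) :
    pderiv w (PP a b Φ) = PP a b (pderiv w Φ) := by
  rw [PP_apply, PP_apply, map_sum]
  exact Finset.sum_congr rfl fun i _ => by rw [pd_comm, pd_comm w]

lemma pderiv_PP_pow (a b : Fin 3) (r : ℕ) (w : Fin 3 × (VV n ⊕ VV n)) (Φ : TT n) :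
    pderiv w ((PP a b ^ r) Φ) = (PP a b ^ r) (pderiv w Φ) := by
  induction r generalizing Φ with
  | zero => simp
  | succ r ih => rw [pow_succ, Module.End.mul_apply, Module.End.mul_apply, ih, pderiv_PP]

lemma sum_ofFn_split {M : Type*} [AddCommMonoid M] (r : ℕ) (φ : List (VV n) → M) :
    ∑ i : Fin (r + 1) → VV n, φ (List.ofFn i)
      = ∑ v : VV n, ∑ i : Fin r → VV n, φ (List.ofFn i ++ [v]) := by
  calc ∑ i : Fin (r + 1) → VV n, φ (List.ofFn i)
      = ∑ p : VV n × (Fin r → VV n), φ (List.ofFn p.2 ++ [p.1]) := ?_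
    _ = ∑ v : VV n, ∑ i : Fin r → VV n, φ (List.ofFn i ++ [v]) := Fintype.sum_prod_type _
  refine Fintype.sum_equiv (Fin.insertNthEquiv (fun _ => VV n) (Fin.last r)).symm _ _ fun f => ?_
  rw [List.ofFn_succ', List.concat_eq_append]
  have h2 : ((Fin.insertNthEquiv (fun _ => VV n) (Fin.last r)).symm f).2 = fun i => f i.castSucc := by
    funext j
    simp [Fin.insertNthEquiv, Fin.removeNth, Fin.succAbove_last, Fin.init]
  have h1 : ((Fin.insertNthEquiv (fun _ => VV n) (Fin.last r)).symm f).1 = f (Fin.last r) := rfl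
  rw [h1, h2]

lemma keyFG {a b : Fin 3} (hab : a ≠ b) (r : ℕ) (F G : Pol n) :
    ((PP a b ^ r) (emA a F * emA b G) : TT n)
      = ∑ i : Fin r → VV n, emA a (dIter n (List.ofFn i) F) * emA b (dbarIter n (List.ofFn i) G) := by
  induction r generalizing F G with
  | zero => simp [dIter, dbarIter, List.ofFn_zero]
  | succ r ih =>
    have step : PP a b (emA a F * emA b G : TT n)
        = ∑ v : VV n, emA a (pderiv (Sum.inl v) F) * emA b (pderiv (Sum.inr v) G) := by
      rw [PP_apply]
      refine Finset.sum_congr rfl fun v _ => ?_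
      rw [pderiv_mul, pderiv_emA, pderiv_emA_ne hab, mul_zero, add_zero,
        pderiv_mul, pderiv_emA_ne hab.symm, zero_mul, zero_add, pderiv_emA]
    rw [pow_succ, Module.End.mul_apply, step, map_sum,
      sum_ofFn_split r (fun l => emA a (dIter n l F) * emA b (dbarIter n l G))]
    refine Finset.sum_congr rfl fun v _ => ?_
    rw [ih]
    exact Finset.sum_congr rfl fun i _ => by rw [dIter_append, dbarIter_append]

def QL : Module.End ℂ (TT n) := PP 0 2 + PP 1 2
def QR : Module.End ℂ (TT n) := PP 0 1 + PP 0 2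

lemma QL_apply (Φ : TT n) : QL Φ = PP 0 2 Φ + PP 1 2 Φ := rfl
lemma QR_apply (Φ : TT n) : QR Φ = PP 0 1 Φ + PP 0 2 Φ := rfl

lemma key1 (a : ℕ) (Ψ : TT n) (H : Pol n) (hΨ : ∀ v, pderiv (((2 : Fin 3), v)) Ψ = 0) :
    ∑ i : Fin a → VV n, dIter n (List.ofFn i) (muA Ψ) * dbarIter n (List.ofFn i) H
      = muA ((QL ^ a) (Ψ * emA 2 H)) := by
  induction a generalizing Ψ H with
  | zero => simp [dIter, dbarIter, List.ofFn_zero]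
  | succ a ih =>
    rw [sum_ofFn_split a (fun l => dIter n l (muA Ψ) * dbarIter n l H)]
    have hmu : ∀ v : VV n, pderiv (Sum.inl v) (muA Ψ)
        = muA (pderiv (((0 : Fin 3), Sum.inl v)) Ψ + pderiv (((1 : Fin 3), Sum.inl v)) Ψ) := by
      intro v
      rw [pderiv_muA, Fin.sum_univ_three, hΨ, add_zero]
    have claimA : ∀ (c : Fin 3), c ≠ 2 →
        PP c 2 (Ψ * emA 2 H : TT n)
          = ∑ v : VV n, pderiv ((c, Sum.inl v)) Ψ * pderiv (((2 : Fin 3), Sum.inr v)) (emA 2 H) := by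
      intro c hc
      rw [PP_apply]
      refine Finset.sum_congr rfl fun v _ => ?_
      rw [pderiv_mul, pderiv_emA_ne hc, mul_zero, add_zero, pderiv_mul]
      rw [pd_comm, hΨ, map_zero, zero_mul, zero_add]
    calc ∑ v : VV n, ∑ i : Fin a → VV n,
          dIter n (List.ofFn i ++ [v]) (muA Ψ) * dbarIter n (List.ofFn i ++ [v]) H
        = ∑ v : VV n, muA ((QL ^ a)
            ((pderiv (((0 : Fin 3), Sum.inl v)) Ψ + pderiv (((1 : Fin 3), Sum.inl v)) Ψ)
              * emA 2 (pderiv (Sum.inr v) H))) := by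
          refine Finset.sum_congr rfl fun v _ => ?_
          rw [← ih _ _ ?_]
          · exact Finset.sum_congr rfl fun i _ => by
              rw [dIter_append, dbarIter_append, hmu]
          · intro u
            rw [map_add, pd_comm, hΨ, map_zero, pd_comm, hΨ, map_zero, add_zero]
      _ = muA ((QL ^ a) (QL (Ψ * emA 2 H))) := by
          have hQL : QL (Ψ * emA 2 H : TT n)
              = ∑ v : VV n, (pderiv (((0 : Fin 3), Sum.inl v)) Ψ
                  + pderiv (((1 : Fin 3), Sum.inl v)) Ψ) * emA 2 (pderiv (Sum.inr v) H) := by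
            rw [QL_apply, claimA 0 (by decide), claimA 1 (by decide),
              ← Finset.sum_add_distrib]
            refine Finset.sum_congr rfl fun v _ => ?_
            rw [pderiv_emA, add_mul]
          rw [hQL, map_sum (QL ^ a : Module.End ℂ (TT n)) _ Finset.univ,
            map_sum muA _ Finset.univ]
      _ = muA ((QL ^ (a + 1)) (Ψ * emA 2 H)) := by
          rw [pow_succ, Module.End.mul_apply]

lemma key2 (a : ℕ) (Ψ : TT n) (F : Pol n) (hΨ : ∀ v, pderiv (((0 : Fin 3), v)) Ψ = 0) :
    ∑ i : Fin a → VV n, dIter n (List.ofFn i) F * dbarIter n (List.ofFn i) (muA Ψ)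
      = muA ((QR ^ a) (emA 0 F * Ψ)) := by
  induction a generalizing Ψ F with
  | zero => simp [dIter, dbarIter, List.ofFn_zero]
  | succ a ih =>
    rw [sum_ofFn_split a (fun l => dIter n l F * dbarIter n l (muA Ψ))]
    have hmu : ∀ v : VV n, pderiv (Sum.inr v) (muA Ψ)
        = muA (pderiv (((1 : Fin 3), Sum.inr v)) Ψ + pderiv (((2 : Fin 3), Sum.inr v)) Ψ) := by
      intro v
      rw [pderiv_muA, Fin.sum_univ_three, hΨ, zero_add]
    have claimB : ∀ (c : Fin 3), c ≠ 0 →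
        PP 0 c (emA 0 F * Ψ : TT n)
          = ∑ v : VV n, pderiv (((0 : Fin 3), Sum.inl v)) (emA 0 F) * pderiv ((c, Sum.inr v)) Ψ := by
      intro c hc
      rw [PP_apply]
      refine Finset.sum_congr rfl fun v _ => ?_
      rw [pderiv_mul, hΨ, mul_zero, add_zero, pderiv_mul]
      rw [pderiv_emA, pderiv_emA_ne hc, zero_mul, zero_add]
    calc ∑ v : VV n, ∑ i : Fin a → VV n,
          dIter n (List.ofFn i ++ [v]) F * dbarIter n (List.ofFn i ++ [v]) (muA Ψ)
        = ∑ v : VV n, muA ((QR ^ a)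
            (emA 0 (pderiv (Sum.inl v) F)
              * (pderiv (((1 : Fin 3), Sum.inr v)) Ψ + pderiv (((2 : Fin 3), Sum.inr v)) Ψ))) := by
          refine Finset.sum_congr rfl fun v _ => ?_
          rw [← ih _ _ ?_]
          · exact Finset.sum_congr rfl fun i _ => by
              rw [dIter_append, dbarIter_append, hmu]
          · intro u
            rw [map_add, pd_comm, hΨ, map_zero, pd_comm, hΨ, map_zero, add_zero]
      _ = muA ((QR ^ a) (QR (emA 0 F * Ψ))) := by
          have hQR : QR (emA 0 F * Ψ : TT n)
              = ∑ v : VV n, emA 0 (pderiv (Sum.inl v) F)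
                  * (pderiv (((1 : Fin 3), Sum.inr v)) Ψ + pderiv (((2 : Fin 3), Sum.inr v)) Ψ) := by
            rw [QR_apply, claimB 1 (by decide), claimB 2 (by decide),
              ← Finset.sum_add_distrib]
            refine Finset.sum_congr rfl fun v _ => ?_
            rw [pderiv_emA, mul_add]
          rw [hQR, map_sum (QR ^ a : Module.End ℂ (TT n)) _ Finset.univ,
            map_sum muA _ Finset.univ]
      _ = muA ((QR ^ (a + 1)) (emA 0 F * Ψ)) := by
          rw [pow_succ, Module.End.mul_apply]

lemma PP_mul_emA {a b k : Fin 3} (ha : a ≠ k) (hb : b ≠ k) (Φ : TT n) (H : Pol n) :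
    PP a b (Φ * emA k H : TT n) = PP a b Φ * emA k H := by
  rw [PP_apply, PP_apply, Finset.sum_mul]
  refine Finset.sum_congr rfl fun v _ => ?_
  rw [pderiv_mul, pderiv_emA_ne ha, mul_zero, add_zero, pderiv_mul, pderiv_emA_ne hb,
    mul_zero, add_zero]

lemma PP_pow_mul_emA {a b k : Fin 3} (ha : a ≠ k) (hb : b ≠ k) (r : ℕ) (Φ : TT n) (H : Pol n) :
    (PP a b ^ r) (Φ * emA k H : TT n) = (PP a b ^ r) Φ * emA k H := by
  induction r generalizing Φ with
  | zero => simp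
  | succ r ih => rw [pow_succ, Module.End.mul_apply, PP_mul_emA ha hb, ih, Module.End.mul_apply]

lemma PP_pow_emA_mul {a b k : Fin 3} (ha : a ≠ k) (hb : b ≠ k) (r : ℕ) (Φ : TT n) (H : Pol n) :
    (PP a b ^ r) (emA k H * Φ : TT n) = emA k H * (PP a b ^ r) Φ := by
  rw [mul_comm ((emA k H : TT n)) Φ, PP_pow_mul_emA ha hb, mul_comm]

lemma pred_two_base (F G : Pol n) (v : VV n ⊕ VV n) :
    pderiv (((2 : Fin 3), v)) (emA 0 F * emA 1 G : TT n) = 0 := by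
  rw [pderiv_mul, pderiv_emA_ne (by decide), pderiv_emA_ne (by decide), zero_mul, mul_zero,
    add_zero]

lemma pred_zero_base (G H : Pol n) (v : VV n ⊕ VV n) :
    pderiv (((0 : Fin 3), v)) (emA 1 G * emA 2 H : TT n) = 0 := by
  rw [pderiv_mul, pderiv_emA_ne (by decide), pderiv_emA_ne (by decide), zero_mul, mul_zero,
    add_zero]

lemma lhs_term (a b : ℕ) (F G H : Pol n) :
    wickC n a (wickC n b F G) H
      = ((a.factorial : ℂ) * b.factorial)⁻¹
          • muA ((QL ^ a) ((PP 0 1 ^ b) (emA 0 F * emA 1 G * emA 2 H))) := by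
  set Ψ : TT n := (b.factorial : ℂ)⁻¹ • (PP 0 1 ^ b) (emA 0 F * emA 1 G) with hΨdef
  have hpred : ∀ v, pderiv (((2 : Fin 3), v)) Ψ = 0 := fun v => by
    rw [hΨdef, Derivation.map_smul, pderiv_PP_pow, pred_two_base, map_zero, smul_zero]
  have hμ : muA Ψ = wickC n b F G := by
    rw [hΨdef, map_smul, keyFG (by decide) b F G, map_sum, wickC]
    congr 1
    exact Finset.sum_congr rfl fun i _ => by rw [map_mul, muA_emA, muA_emA]
  rw [wickC, ← hμ, key1 a Ψ H hpred]
  have hmove : Ψ * emA 2 H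
      = (b.factorial : ℂ)⁻¹ • (PP 0 1 ^ b) (emA 0 F * emA 1 G * emA 2 H) := by
    rw [hΨdef, smul_mul_assoc,
      PP_pow_mul_emA (show (0:Fin 3) ≠ 2 by decide) (show (1:Fin 3) ≠ 2 by decide) b
        (emA 0 F * emA 1 G) H]
  rw [hmove, map_smul, map_smul, smul_smul, mul_inv]

lemma rhs_term (a b : ℕ) (F G H : Pol n) :
    wickC n a F (wickC n b G H)
      = ((a.factorial : ℂ) * b.factorial)⁻¹
          • muA ((QR ^ a) ((PP 1 2 ^ b) (emA 0 F * emA 1 G * emA 2 H))) := by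
  set Ψ : TT n := (b.factorial : ℂ)⁻¹ • (PP 1 2 ^ b) (emA 1 G * emA 2 H) with hΨdef
  have hpred : ∀ v, pderiv (((0 : Fin 3), v)) Ψ = 0 := fun v => by
    rw [hΨdef, Derivation.map_smul, pderiv_PP_pow, pred_zero_base, map_zero, smul_zero]
  have hμ : muA Ψ = wickC n b G H := by
    rw [hΨdef, map_smul, keyFG (by decide) b G H, map_sum, wickC]
    congr 1
    exact Finset.sum_congr rfl fun i _ => by rw [map_mul, muA_emA, muA_emA]
  rw [wickC, ← hμ, key2 a Ψ F hpred]
  have hmove : emA 0 F * Ψ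
      = (b.factorial : ℂ)⁻¹ • (PP 1 2 ^ b) (emA 0 F * emA 1 G * emA 2 H) := by
    rw [hΨdef, mul_smul_comm,
      ← PP_pow_emA_mul (show (1:Fin 3) ≠ 0 by decide) (show (2:Fin 3) ≠ 0 by decide) b
        (emA 1 G * emA 2 H) F, mul_assoc]
  rw [hmove, map_smul, map_smul, smul_smul, mul_inv]

lemma collect (A B : Module.End ℂ (TT n)) (hC : Commute A B) (r : ℕ) (Φ : TT n) :
    ∑ p ∈ Finset.HasAntidiagonal.antidiagonal r,
        ((p.1.factorial : ℂ) * p.2.factorial)⁻¹ • muA ((A ^ p.1) ((B ^ p.2) Φ))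
      = (r.factorial : ℂ)⁻¹ • muA (((A + B) ^ r) Φ) := by
  rw [hC.add_pow, Finset.Nat.sum_antidiagonal_eq_sum_range_succ_mk, LinearMap.sum_apply,
    map_sum, Finset.smul_sum]
  refine Finset.sum_congr rfl fun k hk => ?_
  have hk' : k ≤ r := Nat.lt_succ_iff.mp (Finset.mem_range.mp hk)
  rw [Module.End.mul_apply, Module.End.mul_apply, Module.End.natCast_apply,
    ← Nat.cast_smul_eq_nsmul ℂ, map_smul, map_smul, map_smul, smul_smul]
  have hfact : ((r.choose k : ℂ)) * ((k.factorial : ℂ) * ((r - k).factorial : ℂ))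
      = (r.factorial : ℂ) := by
    rw [← Nat.cast_mul, ← Nat.cast_mul, ← mul_assoc]
    exact_mod_cast congrArg (Nat.cast (R := ℂ)) (Nat.choose_mul_factorial_mul_factorial hk')
  have hch : (r.choose k : ℂ) ≠ 0 := Nat.cast_ne_zero.mpr (Nat.choose_pos hk').ne'
  have hco : ((k.factorial : ℂ) * ((r - k).factorial : ℂ))⁻¹
      = (r.factorial : ℂ)⁻¹ * (r.choose k : ℂ) := by
    rw [← hfact,
      mul_inv ((r.choose k : ℂ)) ((k.factorial : ℂ) * ((r - k).factorial : ℂ)),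
      mul_comm ((r.choose k : ℂ))⁻¹ (((k.factorial : ℂ) * ((r - k).factorial : ℂ))⁻¹),
      mul_assoc, inv_mul_cancel₀ hch, mul_one]
  rw [hco]

@[simp] lemma dIter_zero (l : List (VV n)) : dIter n l (0 : Pol n) = 0 := by
  induction l with
  | nil => rfl
  | cons k l ih => rw [show dIter n (k :: l) 0 = pderiv (Sum.inl k) (dIter n l 0) from rfl, ih,
      map_zero]
@[simp] lemma dbarIter_zero (l : List (VV n)) : dbarIter n l (0 : Pol n) = 0 := by
  induction l with
  | nil => rfl
  | cons k l ih => rw [show dbarIter n (k :: l) 0 = pderiv (Sum.inr k) (dbarIter n l 0) from rfl,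
      ih, map_zero]

@[simp] lemma wickC_zero_left (r : ℕ) (G : Pol n) : wickC n r 0 G = 0 := by
  simp [wickC]
@[simp] lemma wickC_zero_right (r : ℕ) (F : Pol n) : wickC n r F 0 = 0 := by
  simp [wickC]

lemma star_emb_emb (F G : Pol n) : wickStar n (emb n F) (emb n G) = fun r => wickC n r F G := by
  funext r
  rw [wickStar]
  rw [Finset.sum_eq_single ((r, 0) : ℕ × ℕ)]
  · simp [emb]
  · intro p hp hne
    refine Finset.sum_eq_zero fun q hq => ?_
    have hps : p.1 + p.2 = r := Finset.HasAntidiagonal.mem_antidiagonal.mp hp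
    have hqs : q.1 + q.2 = p.2 := Finset.HasAntidiagonal.mem_antidiagonal.mp hq
    have hp2 : p.2 ≠ 0 := fun h => hne (by rw [Prod.ext_iff]; omega)
    by_cases h1 : q.1 = 0
    · have h2 : q.2 ≠ 0 := by omega
      simp [emb, h2]
    · simp [emb, h1]
  · intro h
    exact absurd (Finset.HasAntidiagonal.mem_antidiagonal.mpr (by omega)) h

lemma star_W_emb (W : ℕ → Pol n) (H : Pol n) :
    wickStar n W (emb n H) = fun r => ∑ p ∈ Finset.HasAntidiagonal.antidiagonal r, wickC n p.1 (W p.2) H := by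
  funext r
  rw [wickStar]
  refine Finset.sum_congr rfl fun p _ => ?_
  rw [Finset.sum_eq_single ((p.2, 0) : ℕ × ℕ)]
  · simp [emb]
  · intro q hq hne
    have hqs : q.1 + q.2 = p.2 := Finset.HasAntidiagonal.mem_antidiagonal.mp hq
    have h2 : q.2 ≠ 0 := fun h => hne (by rw [Prod.ext_iff]; omega)
    simp [emb, h2]
  · intro h
    exact absurd (Finset.HasAntidiagonal.mem_antidiagonal.mpr (by omega)) h

lemma star_emb_W (F : Pol n) (W : ℕ → Pol n) :
    wickStar n (emb n F) W = fun r => ∑ p ∈ Finset.HasAntidiagonal.antidiagonal r, wickC n p.1 F (W p.2) := by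
  funext r
  rw [wickStar]
  refine Finset.sum_congr rfl fun p _ => ?_
  rw [Finset.sum_eq_single ((0, p.2) : ℕ × ℕ)]
  · simp [emb]
  · intro q hq hne
    have hqs : q.1 + q.2 = p.2 := Finset.HasAntidiagonal.mem_antidiagonal.mp hq
    have h1 : q.1 ≠ 0 := fun h => hne (by rw [Prod.ext_iff]; omega)
    simp [emb, h1]
  · intro h
    exact absurd (Finset.HasAntidiagonal.mem_antidiagonal.mpr (by omega)) h


end WickAux
/-- For polynomials `F, G` in `z, z̄` the sum defining the Wick
product is finite (all but finitely many Wick terms vanish), and the Wick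
product of polynomials is associative: `(F*G)*H = F*(G*H)`. -/
theorem wick_polynomials_finite_and_associative (n : ℕ) (F G H : Pol n) :
    (∃ N : ℕ, ∀ r : ℕ, N ≤ r → wickC n r F G = 0) ∧
    wickStar n (wickStar n (emb n F) (emb n G)) (emb n H) =
      wickStar n (emb n F) (wickStar n (emb n G) (emb n H)) := by
  constructor
  · refine ⟨F.totalDegree + 1, fun r hr => ?_⟩
    rw [wickC, Finset.sum_eq_zero, smul_zero]
    intro i _
    rw [(dIter_deg (List.ofFn i) F).2 (by simp only [List.length_ofFn]; omega), zero_mul]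
  · rw [star_emb_emb F G, star_emb_emb G H, star_W_emb, star_emb_W]
    funext r
    have hL :
        ∑ p ∈ Finset.HasAntidiagonal.antidiagonal r, wickC n p.1 (wickC n p.2 F G) H
          = (r.factorial : ℂ)⁻¹
              • muA ((((QL + PP 0 1 : Module.End ℂ (TT n))) ^ r)
                  (emA 0 F * emA 1 G * emA 2 H)) := by
      rw [← collect QL (PP 0 1)
        ((commute_PP 0 2 0 1).add_left (commute_PP 1 2 0 1)) r]
      exact Finset.sum_congr rfl fun p _ => lhs_term p.1 p.2 F G H
    have hR :
        ∑ p ∈ Finset.HasAntidiagonal.antidiagonal r, wickC n p.1 F (wickC n p.2 G H)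
          = (r.factorial : ℂ)⁻¹
              • muA ((((QR + PP 1 2 : Module.End ℂ (TT n))) ^ r)
                  (emA 0 F * emA 1 G * emA 2 H)) := by
      rw [← collect QR (PP 1 2)
        ((commute_PP 0 1 1 2).add_left (commute_PP 0 2 1 2)) r]
      exact Finset.sum_congr rfl fun p _ => rhs_term p.1 p.2 F G H
    rw [hL, hR]
    have hEq : (QL + PP 0 1 : Module.End ℂ (TT n)) = QR + PP 1 2 := by
      rw [QL, QR]; abel
    rw [hEq]
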